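/- For every integer n ≥ 7 with n ≡ 1 (mod 3), there exists a claw-free, non-regular, minimally t-tough graph G with t = (2n+1)/6 whose minimum degree is n − 1; in particular, δ(G) = n − 1 > 3t − 2, so the bound 3t − 2 fails as an upper bound for the minimum degree of minimally t-tough claw-free graphs. -/

import Mathlib

open SimpleGraph

/-- `numComp G S` is ω(G − S): the number of connected components of the graph
obtained from `G` by deleting the vertex set `S`. -/
noncomputable def numComp {V : Type*} (G : SimpleGraph V) (S : Set V) : ℕ :=
  Nat.card (G.induce Sᶜ).ConnectedComponent

/-- `G` is `t`-tough: whenever deleting `S` leaves at least two components,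
`|S| ≥ t · ω(G − S)`. -/
def Tough {V : Type*} (t : ℝ) (G : SimpleGraph V) : Prop :=
  ∀ S : Set V, 2 ≤ numComp G S → t * (numComp G S : ℝ) ≤ (S.ncard : ℝ)

/-- `G` is minimally `t`-tough: `G` is `t`-tough and deleting any edge destroys
`t`-toughness. -/
def MinTough {V : Type*} (t : ℝ) (G : SimpleGraph V) : Prop :=
  Tough t G ∧ ∀ e ∈ G.edgeSet, ¬ Tough t (G.deleteEdges {e})

/-- The degree of a vertex, as the cardinality of its neighbor set. -/
noncomputable def ndeg {V : Type*} (G : SimpleGraph V) (v : V) : ℕ :=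
  (G.neighborSet v).ncard

/-- `G` is claw-free: it has no induced `K_{1,3}`. -/
def ClawFree {V : Type*} (G : SimpleGraph V) : Prop :=
  ¬ ∃ v a b c : V, a ≠ b ∧ a ≠ c ∧ b ≠ c ∧ G.Adj v a ∧ G.Adj v b ∧ G.Adj v c ∧
      ¬ G.Adj a b ∧ ¬ G.Adj a c ∧ ¬ G.Adj b c

namespace CFCX

/-- Two disjoint copies of `K_n` (the two sides of `Fin 2 × Fin n`), joined by the
perfect matching on the indices `< s`. With `s = (2n+1)/3` this is a claw-free,
non-regular, minimally `(2n+1)/6`-tough graph with minimum degree `n - 1`. -/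
def Gr (n s : ℕ) : SimpleGraph (Fin 2 × Fin n) where
  Adj v w := (v.1 = w.1 ∧ v.2 ≠ w.2) ∨ (v.1 ≠ w.1 ∧ v.2 = w.2 ∧ v.2.val < s)
  symm := by
    constructor
    rintro v w (⟨h1, h2⟩ | ⟨h1, h2, h3⟩)
    · exact Or.inl ⟨h1.symm, h2.symm⟩
    · exact Or.inr ⟨h1.symm, h2.symm, h2 ▸ h3⟩
  loopless := by constructor; rintro v (⟨h1, h2⟩ | ⟨h1, h2, h3⟩) <;> simp_all

lemma fin2_cases (a : Fin 2) : a = 0 ∨ a = 1 := by omega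

lemma fin2_resolve : ∀ a b σ : Fin 2, a ≠ b → (a = σ ∧ b = σ + 1) ∨ (a = σ + 1 ∧ b = σ) := by
  decide

lemma fin2_succ_ne (σ : Fin 2) : σ + 1 ≠ σ := by revert σ; decide

lemma fin2_three {x y z : Fin 2} (hxy : x ≠ y) (hxz : x ≠ z) (hyz : y ≠ z) : False := by
  revert hxy hxz hyz; revert x y z; decide

/-- A vertex with no neighbors reaches only itself. -/
lemma reach_eq_of_isolated {α : Type*} {H : SimpleGraph α} {x y : α}
    (hx : ∀ z, ¬ H.Adj x z) (h : H.Reachable x y) : x = y := by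
  obtain ⟨w⟩ := h
  cases w with
  | nil => rfl
  | cons h' p => exact absurd h' (hx _)

/-- If every edge preserves `f`, then reachability preserves `f`. -/
lemma reach_const {α β : Type*} {H : SimpleGraph α} (f : α → β)
    (hf : ∀ x y, H.Adj x y → f x = f y) {x y : α} (h : H.Reachable x y) : f x = f y := by
  obtain ⟨w⟩ := h
  induction w with
  | nil => rfl
  | cons h' p ih => exact (hf _ _ h').trans ih

lemma two_le_nat_card {α : Type*} [Finite α] {a b : α} (h : a ≠ b) : 2 ≤ Nat.card α := by
  have hinj : Function.Injective ![a, b] := by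
    intro i j hij
    fin_cases i <;> fin_cases j <;> simp_all
  simpa using Nat.card_le_card_of_injective _ hinj

lemma three_le_nat_card {α : Type*} [Finite α] {a b c : α}
    (hab : a ≠ b) (hac : a ≠ c) (hbc : b ≠ c) : 3 ≤ Nat.card α := by
  have hinj : Function.Injective ![a, b, c] := by
    intro i j hij
    fin_cases i <;> fin_cases j <;> simp_all
  simpa using Nat.card_le_card_of_injective _ hinj

/-! ### Claw-freeness -/

lemma clawFree_Gr (n s : ℕ) : ClawFree (Gr n s) := by
  rintro ⟨v, a, b, c, hab, hac, hbc, _, _, _, hnab, hnac, hnbc⟩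
  have key : ∀ x y : Fin 2 × Fin n, x ≠ y → ¬ (Gr n s).Adj x y → x.1 ≠ y.1 := by
    intro x y hxy hnadj h1
    by_cases h2 : x.2 = y.2
    · exact hxy (Prod.ext h1 h2)
    · exact hnadj (Or.inl ⟨h1, h2⟩)
  exact fin2_three (key a b hab hnab) (key a c hac hnac) (key b c hbc hnbc)

/-! ### Degrees -/

lemma neighborSet_eq (n s : ℕ) (σ : Fin 2) (i : Fin n) :
    (Gr n s).neighborSet (σ, i) =
      ((fun k => (σ, k)) '' {k | k ≠ i}) ∪
        (if i.val < s then {((σ+1 : Fin 2), i)} else ∅) := by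
  ext ⟨τ, k⟩
  simp only [mem_neighborSet, Set.mem_union, Set.mem_image, Set.mem_setOf_eq]
  constructor
  · rintro (⟨h1, h2⟩ | ⟨h1, h2, h3⟩)
    · simp only at h1 h2
      exact Or.inl ⟨k, fun hk => h2 (by simp [hk]), by rw [h1]⟩
    · simp only at h1 h2 h3
      refine Or.inr ?_
      simp only [h3, if_true]
      have hτ : τ = σ + 1 := by
        rcases fin2_resolve σ τ σ h1 with ⟨_, h⟩ | ⟨h, _⟩
        · exact h
        · exact absurd h.symm (fin2_succ_ne σ)
      simp [hτ, h2]
  · rintro (⟨k', hk', hEq⟩ | hm)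
    · obtain ⟨rfl, rfl⟩ := Prod.mk.injEq .. ▸ hEq
      exact Or.inl ⟨rfl, fun h => hk' (by simpa using h.symm)⟩
    · by_cases hs : i.val < s
      · simp only [hs, if_true, Set.mem_singleton_iff] at hm
        obtain ⟨rfl, rfl⟩ := Prod.mk.injEq .. ▸ hm
        exact Or.inr ⟨by simp [fin2_succ_ne], rfl, hs⟩
      · simp [hs] at hm

lemma ncard_ne (n : ℕ) (i : Fin n) : ({k | k ≠ i} : Set (Fin n)).ncard = n - 1 := by
  have h : ({k | k ≠ i} : Set (Fin n)) = Set.univ \ {i} := by ext; simp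
  rw [h, Set.ncard_diff (by simp), Set.ncard_univ, Set.ncard_singleton,
    Nat.card_eq_fintype_card, Fintype.card_fin]

lemma ndeg_eq (n s : ℕ) (σ : Fin 2) (i : Fin n) :
    ndeg (Gr n s) (σ, i) = (n - 1) + (if i.val < s then 1 else 0) := by
  rw [ndeg, neighborSet_eq]
  rw [Set.ncard_union_eq ?disj (Set.toFinite _) (Set.toFinite _)]
  case disj =>
    refine Set.disjoint_left.mpr ?_
    rintro ⟨τ, k⟩ ⟨k', hk', hEq⟩ hmem
    obtain ⟨rfl, rfl⟩ := Prod.mk.injEq .. ▸ hEq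
    by_cases hs : i.val < s
    · simp only [hs, if_true, Set.mem_singleton_iff] at hmem
      have h : σ = σ + 1 := congrArg Prod.fst hmem
      exact fin2_succ_ne σ h.symm
    · simp [hs] at hmem
  have hinj : Function.Injective (fun k : Fin n => (σ, k)) := by
    intro a b hab; simpa using hab
  rw [Set.ncard_image_of_injective _ hinj, ncard_ne]
  by_cases hs : i.val < s <;> simp [hs]

/-! ### Toughness -/

lemma tough_Gr (n s : ℕ) (hs3 : 3*s = 2*n+1) (hsn : s ≤ n) :
    Tough ((2*(n:ℝ)+1)/6) (Gr n s) := by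
  classical
  intro S hS2
  set H := (Gr n s).induce Sᶜ with hH
  -- Step 1: every matched pair meets S
  have cover : ∀ j : Fin n, j.val < s → ((0 : Fin 2), j) ∈ S ∨ ((1 : Fin 2), j) ∈ S := by
    intro j hj
    by_contra hcon
    push_neg at hcon
    obtain ⟨h0, h1⟩ := hcon
    set x0 : ↥Sᶜ := ⟨((0 : Fin 2), j), h0⟩ with hx0
    set x1 : ↥Sᶜ := ⟨((1 : Fin 2), j), h1⟩ with hx1
    have hadj01 : H.Adj x1 x0 := by
      simp only [hH, comap_adj, Function.Embedding.coe_subtype]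
      exact Or.inr ⟨by simp [hx0, hx1], rfl, hj⟩
    have hreach : ∀ y : ↥Sᶜ, H.Reachable y x0 := by
      rintro ⟨⟨τ, k⟩, hy⟩
      rcases fin2_cases τ with rfl | rfl
      · by_cases hk : k = j
        · subst hk; exact Reachable.refl _
        · refine Adj.reachable ?_
          simp only [hH, comap_adj, Function.Embedding.coe_subtype]
          exact Or.inl ⟨rfl, by simpa using hk⟩
      · by_cases hk : k = j
        · subst hk; exact hadj01.reachable
        · refine Reachable.trans (Adj.reachable ?_) hadj01.reachable
          simp only [hH, comap_adj, Function.Embedding.coe_subtype]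
          exact Or.inl ⟨rfl, by simpa using hk⟩
    have hsub : Subsingleton H.ConnectedComponent := by
      constructor
      intro c1 c2
      obtain ⟨y1, hy1⟩ := c1.exists_rep
      obtain ⟨y2, hy2⟩ := c2.exists_rep
      rw [← hy1, ← hy2]
      exact ConnectedComponent.sound ((hreach y1).trans (hreach y2).symm)
    have hle1 : Nat.card H.ConnectedComponent ≤ 1 := by
      have hinj : Function.Injective (fun _ : H.ConnectedComponent => (0 : Fin 1)) :=
        fun a b _ => Subsingleton.elim a b
      simpa using Nat.card_le_card_of_injective _ hinj
    have hge2 : 2 ≤ Nat.card H.ConnectedComponent := hS2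
    omega
  -- Step 2: |S| ≥ s
  have hcard : s ≤ S.ncard := by
    have hmem : ∀ j : Fin s, (if ((0 : Fin 2), Fin.castLE hsn j) ∈ S
        then (((0 : Fin 2), Fin.castLE hsn j) : Fin 2 × Fin n)
        else ((1 : Fin 2), Fin.castLE hsn j)) ∈ S := by
      intro j
      split
      · assumption
      · rcases cover (Fin.castLE hsn j) (by simpa using j.2) with h | h
        · exact absurd h (by assumption)
        · exact h
    set f : Fin s → ↥S := fun j => ⟨_, hmem j⟩ with hf
    have hsnd : ∀ j : Fin s, ((f j : Fin 2 × Fin n)).2 = Fin.castLE hsn j := by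
      intro j
      simp only [hf]
      split <;> rfl
    have hinj : Function.Injective f := by
      intro a b hab
      have h := (hsnd a).symm.trans
        ((congrArg (fun x : ↥S => (x : Fin 2 × Fin n).2) hab).trans (hsnd b))
      exact Fin.castLE_injective hsn h
    have h := Nat.card_le_card_of_injective f hinj
    rw [Nat.card_coe_set_eq] at h
    simpa using h
  -- Step 3: at most two components
  have hle2 : numComp (Gr n s) S ≤ 2 := by
    set g : H.ConnectedComponent → Fin 2 := fun c =>
      if (∃ x : ↥Sᶜ, (x : Fin 2 × Fin n).1 = 0 ∧ H.connectedComponentMk x = c) then 0 else 1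
      with hg
    have hginj : Function.Injective g := by
      intro c1 c2 hgc
      by_cases hc : ∃ x : ↥Sᶜ, (x : Fin 2 × Fin n).1 = 0 ∧ H.connectedComponentMk x = c1
      · have hc2 : ∃ x : ↥Sᶜ, (x : Fin 2 × Fin n).1 = 0 ∧ H.connectedComponentMk x = c2 := by
          by_contra hc2
          simp only [hg, if_pos hc, if_neg hc2] at hgc
          exact absurd hgc (by decide)
        obtain ⟨x1, hx1s, hx1c⟩ := hc
        obtain ⟨x2, hx2s, hx2c⟩ := hc2
        rw [← hx1c, ← hx2c]
        by_cases hxx : x1 = x2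
        · rw [hxx]
        · refine ConnectedComponent.sound (Adj.reachable ?_)
          simp only [hH, comap_adj, Function.Embedding.coe_subtype]
          refine Or.inl ⟨hx1s.trans hx2s.symm, ?_⟩
          intro h2
          exact hxx (Subtype.ext (Prod.ext (hx1s.trans hx2s.symm) h2))
      · have hc2 : ¬ ∃ x : ↥Sᶜ, (x : Fin 2 × Fin n).1 = 0 ∧ H.connectedComponentMk x = c2 := by
          intro hc2
          simp only [hg, if_neg hc, if_pos hc2] at hgc
          exact absurd hgc (by decide)
        obtain ⟨y1, hy1⟩ := c1.exists_rep
        obtain ⟨y2, hy2⟩ := c2.exists_rep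
        have hs1 : (y1 : Fin 2 × Fin n).1 = 1 := by
          rcases fin2_cases (y1 : Fin 2 × Fin n).1 with h | h
          · exact absurd ⟨y1, h, hy1⟩ hc
          · exact h
        have hs2 : (y2 : Fin 2 × Fin n).1 = 1 := by
          rcases fin2_cases (y2 : Fin 2 × Fin n).1 with h | h
          · exact absurd ⟨y2, h, hy2⟩ hc2
          · exact h
        rw [← hy1, ← hy2]
        by_cases hxx : y1 = y2
        · rw [hxx]
        · refine ConnectedComponent.sound (Adj.reachable ?_)
          simp only [hH, comap_adj, Function.Embedding.coe_subtype]
          refine Or.inl ⟨hs1.trans hs2.symm, ?_⟩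
          intro h2
          exact hxx (Subtype.ext (Prod.ext (hs1.trans hs2.symm) h2))
    have h := Nat.card_le_card_of_injective g hginj
    simpa [numComp] using h
  -- Conclude
  have heq : numComp (Gr n s) S = 2 := le_antisymm hle2 hS2
  rw [heq]
  have hsR : (3 : ℝ) * s = 2 * n + 1 := by exact_mod_cast congrArg (Nat.cast : ℕ → ℝ) hs3
  have hSR : (s : ℝ) ≤ (S.ncard : ℝ) := by exact_mod_cast hcard
  push_cast
  linarith

/-! ### Minimality: deleting a matching edge -/

lemma not_tough_matching (n s : ℕ) (hs3 : 3*s = 2*n+1) (hsn : s ≤ n)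
    (σ : Fin 2) (i : Fin n) (hi : i.val < s) :
    ¬ Tough ((2*(n:ℝ)+1)/6)
      ((Gr n s).deleteEdges {s(((σ : Fin 2), i), ((σ+1 : Fin 2), i))}) := by
  classical
  intro hT
  set e : Sym2 (Fin 2 × Fin n) := s(((σ : Fin 2), i), ((σ+1 : Fin 2), i)) with he
  set G' := (Gr n s).deleteEdges {e} with hG'
  set S : Set (Fin 2 × Fin n) :=
    (fun j : Fin s => (((σ+1 : Fin 2), Fin.castLE hsn j) : Fin 2 × Fin n)) ''
      {j : Fin s | Fin.castLE hsn j ≠ i} with hS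
  have hSmem : ∀ x : Fin 2 × Fin n, x ∈ S → x.1 = σ + 1 ∧ x.2 ≠ i ∧ x.2.val < s := by
    rintro x ⟨j, hj, rfl⟩
    exact ⟨rfl, hj, by simpa using j.2⟩
  have haS : ((σ, i) : Fin 2 × Fin n) ∈ Sᶜ := by
    intro hmem
    exact fin2_succ_ne σ ((hSmem _ hmem).1.symm)
  have hbS : (((σ+1 : Fin 2), i) : Fin 2 × Fin n) ∈ Sᶜ := by
    intro hmem
    exact (hSmem _ hmem).2.1 rfl
  set H := G'.induce Sᶜ with hH
  have hside : ∀ x y : ↥Sᶜ, H.Adj x y → (x : Fin 2 × Fin n).1 = (y : Fin 2 × Fin n).1 := by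
    rintro ⟨⟨a, k⟩, hx⟩ ⟨⟨b, l⟩, hy⟩ hadj
    simp only [hH, hG', comap_adj, Function.Embedding.coe_subtype, deleteEdges_adj,
      Set.mem_singleton_iff] at hadj
    obtain ⟨hadj, hne⟩ := hadj
    rcases hadj with ⟨h1, _⟩ | ⟨h1, h2, h3⟩
    · exact h1
    · exfalso
      simp only at h1 h2 h3
      subst h2
      by_cases hk : k = i
      · subst hk
        rcases fin2_resolve a b σ h1 with ⟨rfl, rfl⟩ | ⟨rfl, rfl⟩
        · exact hne rfl
        · exact hne (Sym2.eq_swap)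
      · rcases fin2_resolve a b (σ+1) h1 with ⟨rfl, rfl⟩ | ⟨rfl, rfl⟩
        · exact hx ⟨⟨k.val, h3⟩, by simpa using hk, by simp⟩
        · exact hy ⟨⟨k.val, h3⟩, by simpa using hk, by simp⟩
  have h2 : 2 ≤ numComp G' S := by
    have hne : H.connectedComponentMk ⟨(σ, i), haS⟩ ≠
        H.connectedComponentMk ⟨((σ+1:Fin 2), i), hbS⟩ := by
      intro hcon
      have h := reach_const (fun x : ↥Sᶜ => (x : Fin 2 × Fin n).1) hside
        (ConnectedComponent.exact hcon)
      exact fin2_succ_ne σ h.symm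
    exact two_le_nat_card hne
  have hcard : S.ncard < s := by
    have h1 : S.ncard ≤ ({j : Fin s | Fin.castLE hsn j ≠ i} : Set (Fin s)).ncard := by
      rw [hS]
      exact Set.ncard_image_le (Set.toFinite _)
    have h2' : ({j : Fin s | Fin.castLE hsn j ≠ i} : Set (Fin s)).ncard <
        (Set.univ : Set (Fin s)).ncard := by
      refine Set.ncard_lt_ncard ?_ (Set.toFinite _)
      constructor
      · exact Set.subset_univ _
      · intro hsub
        have hm : (⟨i.val, hi⟩ : Fin s) ∈ {j : Fin s | Fin.castLE hsn j ≠ i} := hsub (by trivial)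
        simp only [Set.mem_setOf_eq] at hm
        exact hm (by ext; simp)
    rw [Set.ncard_univ, Nat.card_eq_fintype_card, Fintype.card_fin] at h2'
    omega
  have hineq := hT S h2
  have hsR : (3 : ℝ) * s = 2 * n + 1 := by exact_mod_cast congrArg (Nat.cast : ℕ → ℝ) hs3
  have hSR : (S.ncard : ℝ) < (s : ℝ) := by exact_mod_cast hcard
  have hω : (2 : ℝ) ≤ (numComp G' S : ℝ) := by exact_mod_cast h2
  have ht0 : (0 : ℝ) ≤ (2*(n:ℝ)+1)/6 := by positivity
  nlinarith

/-! ### Minimality: deleting a clique edge -/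

lemma not_tough_clique (n s : ℕ) (hs3 : 3*s = 2*n+1) (hn3 : 3 ≤ n)
    (σ : Fin 2) (i j : Fin n) (hij : i ≠ j) :
    ¬ Tough ((2*(n:ℝ)+1)/6)
      ((Gr n s).deleteEdges {s(((σ : Fin 2), i), ((σ : Fin 2), j))}) := by
  classical
  intro hT
  set e : Sym2 (Fin 2 × Fin n) := s(((σ : Fin 2), i), ((σ : Fin 2), j)) with he
  set G' := (Gr n s).deleteEdges {e} with hG'
  set S : Set (Fin 2 × Fin n) :=
    ((fun k : Fin n => ((σ : Fin 2), k)) '' {k : Fin n | k ≠ i ∧ k ≠ j}) ∪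
      {((σ+1 : Fin 2), i), ((σ+1 : Fin 2), j)} with hS
  have hSmem : ∀ x : Fin 2 × Fin n, x ∈ S →
      (x.1 = σ ∧ x.2 ≠ i ∧ x.2 ≠ j) ∨ (x.1 = σ + 1 ∧ (x.2 = i ∨ x.2 = j)) := by
    rintro x (⟨k, hk, rfl⟩ | hx)
    · exact Or.inl ⟨rfl, hk.1, hk.2⟩
    · rcases hx with rfl | rfl
      · exact Or.inr ⟨rfl, Or.inl rfl⟩
      · exact Or.inr ⟨rfl, Or.inr rfl⟩
  have huS : ((σ, i) : Fin 2 × Fin n) ∈ Sᶜ := by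
    intro hmem
    rcases hSmem _ hmem with ⟨_, h2, _⟩ | ⟨h1, _⟩
    · exact h2 rfl
    · exact fin2_succ_ne σ h1.symm
  have hvS : ((σ, j) : Fin 2 × Fin n) ∈ Sᶜ := by
    intro hmem
    rcases hSmem _ hmem with ⟨_, _, h3⟩ | ⟨h1, _⟩
    · exact h3 rfl
    · exact fin2_succ_ne σ h1.symm
  obtain ⟨k0, hk0i, hk0j⟩ : ∃ k0 : Fin n, k0 ≠ i ∧ k0 ≠ j := by
    have hcard : ({i, j} : Finset (Fin n)).card ≤ 2 := by
      refine (Finset.card_insert_le _ _).trans ?_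
      simp
    have hpos : 0 < (Finset.univ \ ({i, j} : Finset (Fin n))).card := by
      rw [Finset.card_sdiff_of_subset (Finset.subset_univ _), Finset.card_univ, Fintype.card_fin]
      omega
    obtain ⟨k0, hk0⟩ := Finset.card_pos.mp hpos
    simp only [Finset.mem_sdiff, Finset.mem_univ, Finset.mem_insert,
      Finset.mem_singleton, true_and] at hk0
    push_neg at hk0
    exact ⟨k0, hk0⟩
  have hwS : (((σ+1 : Fin 2), k0) : Fin 2 × Fin n) ∈ Sᶜ := by
    intro hmem
    rcases hSmem _ hmem with ⟨h1, _, _⟩ | ⟨_, h2⟩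
    · exact fin2_succ_ne σ h1
    · rcases h2 with h2 | h2
      · exact hk0i h2
      · exact hk0j h2
  set H := G'.induce Sᶜ with hH
  have hu_iso : ∀ z : ↥Sᶜ, ¬ H.Adj ⟨(σ, i), huS⟩ z := by
    rintro ⟨⟨b, l⟩, hz⟩ hadj
    simp only [hH, hG', comap_adj, Function.Embedding.coe_subtype, deleteEdges_adj,
      Set.mem_singleton_iff] at hadj
    obtain ⟨hadj, hne⟩ := hadj
    rcases hadj with ⟨h1, h2⟩ | ⟨h1, h2, h3⟩
    · simp only at h1 h2
      subst h1
      by_cases hl : l = j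
      · subst hl; exact hne rfl
      · refine hz (Or.inl ⟨l, ⟨fun hli => h2 (by simp [hli.symm]), hl⟩, rfl⟩)
    · simp only at h1 h2 h3
      subst h2
      have hb : b = σ + 1 := by
        rcases fin2_resolve σ b σ h1 with ⟨_, h⟩ | ⟨h, _⟩
        · exact h
        · exact absurd h.symm (fin2_succ_ne σ)
      subst hb
      exact hz (Or.inr (by simp))
  have hv_iso : ∀ z : ↥Sᶜ, ¬ H.Adj ⟨(σ, j), hvS⟩ z := by
    rintro ⟨⟨b, l⟩, hz⟩ hadj
    simp only [hH, hG', comap_adj, Function.Embedding.coe_subtype, deleteEdges_adj,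
      Set.mem_singleton_iff] at hadj
    obtain ⟨hadj, hne⟩ := hadj
    rcases hadj with ⟨h1, h2⟩ | ⟨h1, h2, h3⟩
    · simp only at h1 h2
      subst h1
      by_cases hl : l = i
      · subst hl; exact hne Sym2.eq_swap
      · refine hz (Or.inl ⟨l, ⟨hl, fun hlj => h2 (by simp [hlj.symm])⟩, rfl⟩)
    · simp only at h1 h2 h3
      subst h2
      have hb : b = σ + 1 := by
        rcases fin2_resolve σ b σ h1 with ⟨_, h⟩ | ⟨h, _⟩
        · exact h
        · exact absurd h.symm (fin2_succ_ne σ)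
      subst hb
      exact hz (Or.inr (by simp))
  have h3comp : 3 ≤ numComp G' S := by
    have huv : H.connectedComponentMk ⟨(σ, i), huS⟩ ≠ H.connectedComponentMk ⟨(σ, j), hvS⟩ := by
      intro hcon
      have h := reach_eq_of_isolated hu_iso (ConnectedComponent.exact hcon)
      have h2 := congrArg (fun x : ↥Sᶜ => (x : Fin 2 × Fin n).2) h
      exact hij h2
    have huw : H.connectedComponentMk ⟨(σ, i), huS⟩ ≠
        H.connectedComponentMk ⟨((σ+1:Fin 2), k0), hwS⟩ := by
      intro hcon
      have h := reach_eq_of_isolated hu_iso (ConnectedComponent.exact hcon)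
      have h2 := congrArg (fun x : ↥Sᶜ => (x : Fin 2 × Fin n).1) h
      exact fin2_succ_ne σ h2.symm
    have hvw : H.connectedComponentMk ⟨(σ, j), hvS⟩ ≠
        H.connectedComponentMk ⟨((σ+1:Fin 2), k0), hwS⟩ := by
      intro hcon
      have h := reach_eq_of_isolated hv_iso (ConnectedComponent.exact hcon)
      have h2 := congrArg (fun x : ↥Sᶜ => (x : Fin 2 × Fin n).1) h
      exact fin2_succ_ne σ h2.symm
    exact three_le_nat_card huv huw hvw
  have hcard : S.ncard ≤ n := by
    have h1 : ((fun k : Fin n => ((σ : Fin 2), k)) '' {k : Fin n | k ≠ i ∧ k ≠ j}).ncard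
        ≤ n - 2 := by
      refine le_trans (Set.ncard_image_le (Set.toFinite _)) ?_
      have heq2 : ({k : Fin n | k ≠ i ∧ k ≠ j} : Set (Fin n)) = Set.univ \ {i, j} := by
        ext k; simp [and_comm]
      rw [heq2, Set.ncard_diff (by simp), Set.ncard_univ, Nat.card_eq_fintype_card,
        Fintype.card_fin, Set.ncard_pair hij]
    have h2 : ({((σ+1 : Fin 2), i), ((σ+1 : Fin 2), j)} : Set (Fin 2 × Fin n)).ncard ≤ 2 := by
      refine (Set.ncard_insert_le _ _).trans ?_
      simp
    calc S.ncard ≤ _ + _ := Set.ncard_union_le _ _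
    _ ≤ (n - 2) + 2 := Nat.add_le_add h1 h2
    _ = n := by omega
  have h2comp : 2 ≤ numComp G' S := le_trans (by norm_num) h3comp
  have hineq := hT S h2comp
  have hsR : (3 : ℝ) * s = 2 * n + 1 := by exact_mod_cast congrArg (Nat.cast : ℕ → ℝ) hs3
  have hSR : (S.ncard : ℝ) ≤ (n : ℝ) := by exact_mod_cast hcard
  have hω : (3 : ℝ) ≤ (numComp G' S : ℝ) := by exact_mod_cast h3comp
  have ht0 : (0 : ℝ) ≤ (2*(n:ℝ)+1)/6 := by positivity
  nlinarith

/-! ### Minimal toughness -/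

lemma minTough_Gr (n s : ℕ) (hs3 : 3*s = 2*n+1) (hsn : s ≤ n) (hn3 : 3 ≤ n) :
    MinTough ((2*(n:ℝ)+1)/6) (Gr n s) := by
  refine ⟨tough_Gr n s hs3 hsn, ?_⟩
  intro e he
  induction e using Sym2.ind with
  | _ u v =>
    rw [mem_edgeSet] at he
    obtain ⟨a, i⟩ := u
    obtain ⟨b, k⟩ := v
    rcases he with ⟨h1, h2⟩ | ⟨h1, h2, h3⟩
    · -- clique edge
      simp only at h1 h2
      subst h1
      exact not_tough_clique n s hs3 hn3 a i k h2
    · -- matching edge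
      simp only at h1 h2 h3
      subst h2
      have hb : b = a + 1 := by
        rcases fin2_resolve a b a h1 with ⟨_, h⟩ | ⟨h, _⟩
        · exact h
        · exact absurd h.symm (fin2_succ_ne a)
      subst hb
      exact not_tough_matching n s hs3 hsn a i h3

end CFCX

/-- for every integer `n ≥ 7` with `n ≡ 1 (mod 3)`, there is a
claw-free, non-regular, minimally `t`-tough graph `G` with `t = (2n+1)/6` and
minimum degree `n − 1`; in particular `δ(G) = n − 1 > 3t − 2`. -/
theorem exists_clawfree_counterexample (n : ℕ) (hn : 7 ≤ n) (hmod : n % 3 = 1) :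
    ∃ (V : Type) (_ : Fintype V) (G : SimpleGraph V),
      ClawFree G ∧
      (∃ v w : V, ndeg G v ≠ ndeg G w) ∧
      MinTough ((2 * (n : ℝ) + 1) / 6) G ∧
      ((∀ v : V, n - 1 ≤ ndeg G v) ∧ (∃ v : V, ndeg G v = n - 1)) ∧
      ((n : ℝ) - 1 > 3 * ((2 * (n : ℝ) + 1) / 6) - 2) := by
  obtain ⟨m, rfl⟩ : ∃ m, n = 3*m+1 := ⟨n/3, by omega⟩
  set n := 3*m+1 with hn'
  have hm2 : 2 ≤ m := by omega
  set s : ℕ := 2*m+1 with hs'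
  have hs3 : 3*s = 2*n+1 := by omega
  have hsn : s ≤ n := by omega
  have hn3 : 3 ≤ n := by omega
  refine ⟨Fin 2 × Fin n, inferInstance, CFCX.Gr n s, CFCX.clawFree_Gr n s, ?_, ?_, ⟨?_, ?_⟩, ?_⟩
  · -- non-regular
    refine ⟨((0 : Fin 2), ⟨0, by omega⟩), ((0 : Fin 2), ⟨n-1, by omega⟩), ?_⟩
    rw [CFCX.ndeg_eq, CFCX.ndeg_eq]
    simp only
    rw [if_pos (by omega : (0:ℕ) < s), if_neg (by omega : ¬ (n-1 < s))]
    omega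
  · -- minimally tough
    exact CFCX.minTough_Gr n s hs3 hsn hn3
  · -- min degree lower bound
    rintro ⟨σ, i⟩
    rw [CFCX.ndeg_eq]
    exact Nat.le_add_right _ _
  · -- min degree attained
    refine ⟨((0 : Fin 2), ⟨n-1, by omega⟩), ?_⟩
    rw [CFCX.ndeg_eq]
    rw [if_neg (by omega : ¬ (n-1 < s))]
    omega
  · -- numeric inequality
    have : (7 : ℝ) ≤ (n : ℝ) := by exact_mod_cast hn
    linarith
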